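/- Let k ≥ 2, let S be a non-trivial simplicial k-circuit, and let uv be an edge of G(S). Then there exist m ≥ 1 and non-trivial simplicial k-circuits S₁, …, S_m such that: (a) S_i/uv is a simplicial k-circuit for each i; (b) every simplex of S_i that does not belong to S is a (k+1)-element clique of G(S) containing {u,v}; (c) every simplex of S not containing {u,v} belongs to exactly one S_i, and S = S₁ △ ⋯ △ S_m, where △ denotes symmetric difference; (d) uv ∈ E(S_i) for each i, and E(S₁) ∪ ⋯ ∪ E(S_m) = E(S); and (e) for every nonempty proper subset I of {1,…,m} there exist j ∉ I and a (k+1)-element set K with {u,v} ⊆ K such that K is a clique of G(S), K ∉ S, and K belongs to both △_{i∈I} S_i and S_j. -/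

import Mathlib

/-! ### Simplicial multicomplexes over the vertex type ℕ -/

/-- The vertex set of a simplicial multicomplex: the union of its simplices. -/
def vertexSet (S : Multiset (Finset ℕ)) : Finset ℕ := S.toFinset.sup id

lemma mem_vertexSet_of_mem {S : Multiset (Finset ℕ)} {U : Finset ℕ} {x : ℕ}
    (hU : U ∈ S) (hx : x ∈ U) : x ∈ vertexSet S :=
  Finset.mem_of_subset (Finset.le_sup (f := id) (Multiset.mem_toFinset.2 hU)) hx

/-- The number of simplices of `S` containing `F`, counted with multiplicity. -/
def simplexCount (S : Multiset (Finset ℕ)) (F : Finset ℕ) : ℕ :=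
  Multiset.countP (fun U => F ⊆ U) S

/-- `S` is a simplicial `k`-multicomplex: all its members are `(k+1)`-element sets. -/
def IsMultiComplex (k : ℕ) (S : Multiset (Finset ℕ)) : Prop :=
  ∀ U ∈ S, U.card = k + 1

/-- The boundary of `S`: all `k`-element sets lying in an odd number of simplices of `S`,
counted with multiplicity. -/
def boundarySet (k : ℕ) (S : Multiset (Finset ℕ)) : Set (Finset ℕ) :=
  {F | F.card = k ∧ Odd (simplexCount S F)}

/-- A simplicial `k`-cycle: a simplicial `k`-multicomplex with empty boundary. -/
def IsSimpCycle (k : ℕ) (S : Multiset (Finset ℕ)) : Prop :=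
  IsMultiComplex k S ∧ ∀ F : Finset ℕ, F.card = k → Even (simplexCount S F)

/-- A simplicial `k`-circuit: a nonempty simplicial `k`-cycle, no proper nonempty
sub-multiset of which is a simplicial `k`-cycle. -/
def IsSimpCircuit (k : ℕ) (S : Multiset (Finset ℕ)) : Prop :=
  IsSimpCycle k S ∧ S ≠ 0 ∧
    ∀ T : Multiset (Finset ℕ), T ≤ S → T ≠ 0 → T ≠ S → ¬ IsSimpCycle k T

/-- A trivial simplicial circuit consists of two copies of a single simplex. -/
def IsTrivialSimpCircuit (S : Multiset (Finset ℕ)) : Prop :=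
  ∃ U : Finset ℕ, S = {U, U}

/-- Symmetric difference of multisets (for multisets with no repeated members this is the
usual symmetric difference of sets). -/
def symmDiffM (S T : Multiset (Finset ℕ)) : Multiset (Finset ℕ) := (S - T) + (T - S)

/-- Contraction of the vertex `v` onto the vertex `u`: delete every simplex containing both
`u` and `v`, and replace every simplex `U` containing `v` but not `u` by `(U∖{v})∪{u}`. -/
def contractS (S : Multiset (Finset ℕ)) (u v : ℕ) : Multiset (Finset ℕ) :=
  (S.filter fun U => ¬ (u ∈ U ∧ v ∈ U)).map fun U =>
    if v ∈ U then insert u (U.erase v) else U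

namespace FD

def phi (u v : ℕ) (U : Finset ℕ) : Finset ℕ := if v ∈ U then insert u (U.erase v) else U

lemma countP_map' {α β : Type*} (f : α → β) (s : Multiset α) (p : β → Prop) [DecidablePred p] :
    Multiset.countP p (s.map f) = Multiset.countP (fun a => p (f a)) s := by
  rw [Multiset.countP_map]; simp [Multiset.countP_eq_card_filter]

lemma contractS_eq_map (S : Multiset (Finset ℕ)) (u v : ℕ) :
    contractS S u v = (S.filter fun U => ¬ (u ∈ U ∧ v ∈ U)).map (phi u v) := rfl

variable {u v : ℕ}

lemma v_not_mem_phi (hne : u ≠ v) (U : Finset ℕ) : v ∉ phi u v U := by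
  unfold phi
  split <;> rename_i h
  · simp [Ne.symm hne]
  · exact h

lemma phi_card (hne : u ≠ v) {U : Finset ℕ} (hU : ¬ (u ∈ U ∧ v ∈ U)) :
    (phi u v U).card = U.card := by
  unfold phi
  split <;> rename_i h
  · have hu : u ∉ U := fun hu => hU ⟨hu, h⟩
    rw [Finset.card_insert_of_notMem (fun hc => hu (Finset.mem_of_mem_erase hc)),
      Finset.card_erase_of_mem h]
    have : 0 < U.card := Finset.card_pos.2 ⟨v, h⟩
    omega
  · rfl

lemma sub_phi_iff_of_not_mem (hne : u ≠ v) {U F : Finset ℕ} (hU : ¬ (u ∈ U ∧ v ∈ U))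
    (huF : u ∉ F) (hvF : v ∉ F) : F ⊆ phi u v U ↔ F ⊆ U := by
  unfold phi
  split <;> rename_i h
  · constructor
    · intro hsub x hx
      rcases Finset.mem_insert.1 (hsub hx) with rfl | hx'
      · exact absurd hx huF
      · exact Finset.mem_of_mem_erase hx'
    · intro hsub x hx
      exact Finset.mem_insert_of_mem (Finset.mem_erase.2 ⟨fun hc => hvF (hc ▸ hx), hsub hx⟩)
  · rfl

lemma sub_phi_iff_of_mem (hne : u ≠ v) {U F : Finset ℕ} (hvU : v ∈ U) (huU : u ∉ U)
    (huF : u ∈ F) (hvF : v ∉ F) :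
    F ⊆ insert u (U.erase v) ↔ insert v (F.erase u) ⊆ U := by
  constructor
  · intro hsub x hx
    rcases Finset.mem_insert.1 hx with rfl | hx'
    · exact hvU
    · obtain ⟨hxu, hxF⟩ := Finset.mem_erase.1 hx'
      rcases Finset.mem_insert.1 (hsub hxF) with rfl | h2
      · exact absurd rfl hxu
      · exact Finset.mem_of_mem_erase h2
  · intro hsub x hx
    by_cases hxu : x = u
    · subst hxu; exact Finset.mem_insert_self _ _
    · have hxU : x ∈ U := hsub (Finset.mem_insert_of_mem (Finset.mem_erase.2 ⟨hxu, hx⟩))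
      exact Finset.mem_insert_of_mem (Finset.mem_erase.2 ⟨fun hc => hvF (hc ▸ hx), hxU⟩)

/-- hat F = insert v (F.erase u) -/
lemma countR_v_mem (hne : u ≠ v) (R : Multiset (Finset ℕ)) {F : Finset ℕ} (hvF : v ∈ F) :
    simplexCount (R.map (phi u v)) F = 0 := by
  rw [simplexCount, Multiset.countP_eq_zero]
  rintro W hW hsub
  obtain ⟨U, _, rfl⟩ := Multiset.mem_map.1 hW
  exact v_not_mem_phi hne U (hsub hvF)

lemma countR_not_mem (hne : u ≠ v) {R : Multiset (Finset ℕ)}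
    (hR : ∀ U ∈ R, ¬ (u ∈ U ∧ v ∈ U)) {F : Finset ℕ} (huF : u ∉ F) (hvF : v ∉ F) :
    simplexCount (R.map (phi u v)) F = simplexCount R F := by
  rw [simplexCount, countP_map']
  exact Multiset.countP_congr rfl fun U hU =>
    propext (sub_phi_iff_of_not_mem hne (hR U hU) huF hvF)

lemma countP_or_disjoint {α : Type*} (p q : α → Prop) [DecidablePred p] [DecidablePred q]
    (s : Multiset α) (h : ∀ a ∈ s, ¬(p a ∧ q a)) :
    Multiset.countP (fun a => p a ∨ q a) s = Multiset.countP p s + Multiset.countP q s := by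
  induction s using Multiset.induction_on with
  | empty => simp
  | cons a t ih =>
    rw [Multiset.countP_cons, Multiset.countP_cons, Multiset.countP_cons,
      ih (fun x hx => h x (Multiset.mem_cons_of_mem hx))]
    have := h a (Multiset.mem_cons_self a t)
    by_cases hp : p a <;> by_cases hq : q a <;> simp [hp, hq] at this ⊢ <;> omega

lemma countR_u_mem (hne : u ≠ v) {R : Multiset (Finset ℕ)}
    (hR : ∀ U ∈ R, ¬ (u ∈ U ∧ v ∈ U)) {F : Finset ℕ} (huF : u ∈ F) (hvF : v ∉ F) :
    simplexCount (R.map (phi u v)) F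
      = simplexCount R F + simplexCount R (insert v (F.erase u)) := by
  rw [simplexCount, countP_map']
  have step : Multiset.countP (fun U => F ⊆ phi u v U) R
      = Multiset.countP (fun U => F ⊆ U ∨ insert v (F.erase u) ⊆ U) R := by
    refine Multiset.countP_congr rfl fun U hU => propext ?_
    have hU' := hR U hU
    unfold phi
    split <;> rename_i h
    · have huU : u ∉ U := fun hu => hU' ⟨hu, h⟩
      rw [sub_phi_iff_of_mem hne h huU huF hvF]
      constructor
      · exact Or.inr
      · rintro (hc | hc)
        · exact absurd (hc huF) huU
        · exact hc
    · constructor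
      · exact Or.inl
      · rintro (hc | hc)
        · exact hc
        · exact absurd (hc (Finset.mem_insert_self v _)) h
  rw [step, countP_or_disjoint]
  · rfl
  · rintro U hU ⟨h1, h2⟩
    exact hR U hU ⟨h1 huF, h2 (Finset.mem_insert_self v _)⟩

-- splitting a multiset count by whether simplices contain both u and v
lemma count_split (S' : Multiset (Finset ℕ)) (F : Finset ℕ) :
    simplexCount S' F = simplexCount (S'.filter fun U => ¬ (u ∈ U ∧ v ∈ U)) F
      + simplexCount (S'.filter fun U => u ∈ U ∧ v ∈ U) F := by
  unfold simplexCount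
  conv_lhs => rw [← Multiset.filter_add_not (fun U => u ∈ U ∧ v ∈ U) S']
  rw [Multiset.countP_add]
  omega

lemma count_both_of_not_mem {k : ℕ} (hne : u ≠ v) {S' : Multiset (Finset ℕ)}
    (hmc : IsMultiComplex k S') {F : Finset ℕ} (hF : F.card = k) (huF : u ∉ F) (hvF : v ∉ F) :
    simplexCount (S'.filter fun U => u ∈ U ∧ v ∈ U) F = 0 := by
  rw [simplexCount, Multiset.countP_eq_zero]
  intro U hU hsub
  obtain ⟨hUS, huv⟩ := Multiset.mem_filter.1 hU
  have h1 : insert u (insert v F) ⊆ U := by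
    intro x hx
    rcases Finset.mem_insert.1 hx with rfl | hx'
    · exact huv.1
    · rcases Finset.mem_insert.1 hx' with rfl | hx''
      · exact huv.2
      · exact hsub hx''
  have hc1 : (insert v F).card = k + 1 := by rw [Finset.card_insert_of_notMem hvF, hF]
  have hc2 : (insert u (insert v F)).card = k + 2 := by
    rw [Finset.card_insert_of_notMem (by simp [hne, huF]), hc1]
  have := Finset.card_le_card h1
  rw [hc2, hmc U hUS] at this
  omega

lemma count_both_of_u_mem {k : ℕ} {S' : Multiset (Finset ℕ)}
    (hmc : IsMultiComplex k S') {F : Finset ℕ} (hF : F.card = k) (huF : u ∈ F) (hvF : v ∉ F) :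
    simplexCount (S'.filter fun U => u ∈ U ∧ v ∈ U) F
      = Multiset.countP (fun U => U = insert v F) S' := by
  rw [simplexCount, Multiset.countP_filter]
  refine Multiset.countP_congr rfl fun U hU => propext ?_
  constructor
  · rintro ⟨hsub, hu, hv⟩
    have h1 : insert v F ⊆ U := Finset.insert_subset hv hsub
    have := Finset.card_le_card h1
    refine (Finset.eq_of_subset_of_card_le h1 ?_).symm
    rw [hmc U hU, Finset.card_insert_of_notMem hvF, hF]
  · rintro rfl
    exact ⟨Finset.subset_insert _ _, Finset.mem_insert_of_mem huF, Finset.mem_insert_self _ _⟩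

lemma count_both_of_v_mem {k : ℕ} {S' : Multiset (Finset ℕ)}
    (hmc : IsMultiComplex k S') {F : Finset ℕ} (hF : F.card = k) (huF : u ∉ F) (hvF : v ∈ F) :
    simplexCount (S'.filter fun U => u ∈ U ∧ v ∈ U) F
      = Multiset.countP (fun U => U = insert u F) S' := by
  rw [simplexCount, Multiset.countP_filter]
  refine Multiset.countP_congr rfl fun U hU => propext ?_
  constructor
  · rintro ⟨hsub, hu, hv⟩
    have h1 : insert u F ⊆ U := Finset.insert_subset hu hsub
    refine (Finset.eq_of_subset_of_card_le h1 ?_).symm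
    rw [hmc U hU, Finset.card_insert_of_notMem huF, hF]
  · rintro rfl
    exact ⟨Finset.subset_insert _ _, Finset.mem_insert_self _ _, Finset.mem_insert_of_mem hvF⟩

lemma hat_card (hne : u ≠ v) {F : Finset ℕ} (huF : u ∈ F) (hvF : v ∉ F) :
    (insert v (F.erase u)).card = F.card := by
  rw [Finset.card_insert_of_notMem (fun hc => hvF (Finset.mem_of_mem_erase hc)),
    Finset.card_erase_of_mem huF]
  have : 0 < F.card := Finset.card_pos.2 ⟨u, huF⟩
  omega

lemma u_not_mem_hat (hne : u ≠ v) (F : Finset ℕ) : u ∉ insert v (F.erase u) := by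
  simp [hne, Finset.mem_erase]

lemma insert_u_hat {F : Finset ℕ} (huF : u ∈ F) :
    insert u (insert v (F.erase u)) = insert v F := by
  rw [Finset.insert_comm, Finset.insert_erase huF]

lemma hat_hat {F : Finset ℕ} (huF : u ∉ F) (hvF : v ∈ F) :
    insert v ((insert u (F.erase v)).erase u) = F := by
  rw [Finset.erase_insert (by simp [huF, Finset.mem_erase]), Finset.insert_erase hvF]

lemma contract_cycle {k : ℕ} (hne : u ≠ v) {S' : Multiset (Finset ℕ)} (h : IsSimpCycle k S') :
    IsSimpCycle k (contractS S' u v) := by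
  obtain ⟨hmc, hcyc⟩ := h
  have hR : ∀ U ∈ (S'.filter fun U => ¬ (u ∈ U ∧ v ∈ U)), ¬ (u ∈ U ∧ v ∈ U) :=
    fun U hU => (Multiset.mem_filter.1 hU).2
  constructor
  · intro W hW
    rw [contractS_eq_map] at hW
    obtain ⟨U, hU, rfl⟩ := Multiset.mem_map.1 hW
    rw [phi_card hne (hR U hU)]
    exact hmc U (Multiset.mem_of_mem_filter hU)
  · intro F hF
    rw [contractS_eq_map]
    by_cases hvF : v ∈ F
    · rw [countR_v_mem hne _ hvF]; exact Even.zero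
    by_cases huF : u ∈ F
    · rw [countR_u_mem hne hR huF hvF]
      have hFh : (insert v (F.erase u)).card = k := by rw [hat_card hne huF hvF, hF]
      have e1 : simplexCount S' F
          = simplexCount (S'.filter fun U => ¬ (u ∈ U ∧ v ∈ U)) F
            + Multiset.countP (fun U => U = insert v F) S' := by
        rw [count_split (u := u) (v := v), count_both_of_u_mem hmc hF huF hvF]
      have e2 : simplexCount S' (insert v (F.erase u))
          = simplexCount (S'.filter fun U => ¬ (u ∈ U ∧ v ∈ U)) (insert v (F.erase u))
            + Multiset.countP (fun U => U = insert v F) S' := by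
        rw [count_split (u := u) (v := v),
          count_both_of_v_mem hmc hFh (u_not_mem_hat hne F) (Finset.mem_insert_self _ _),
          insert_u_hat huF]
      have h1 := hcyc F hF
      have h2 := hcyc _ hFh
      rw [e1] at h1; rw [e2] at h2
      simp only [Nat.even_iff] at h1 h2 ⊢
      omega
    · rw [countR_not_mem hne hR huF hvF]
      have h1 := hcyc F hF
      rw [count_split (u := u) (v := v), count_both_of_not_mem hne hmc hF huF hvF] at h1
      simpa using h1

lemma cycle_sub {k : ℕ} {S T : Multiset (Finset ℕ)} (hS : IsSimpCycle k S)
    (hT : IsSimpCycle k T) (hle : T ≤ S) : IsSimpCycle k (S - T) := by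
  have hadd : T + (S - T) = S := by rw [add_comm]; exact tsub_add_cancel_of_le hle
  constructor
  · intro U hU
    exact hS.1 U (Multiset.mem_of_le (Multiset.sub_le_self S T) hU)
  · intro F hF
    have h1 := hS.2 F hF
    have h2 := hT.2 F hF
    rw [← hadd, simplexCount, Multiset.countP_add] at h1
    simp only [Nat.even_iff] at h1 h2 ⊢
    unfold simplexCount at *
    omega

lemma circuit_eq_of_subcycle {k : ℕ} {S T : Multiset (Finset ℕ)} (hS : IsSimpCircuit k S)
    (hT : IsSimpCycle k T) (hle : T ≤ S) (h0 : T ≠ 0) : T = S := by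
  by_contra hne
  exact hS.2.2 T hle h0 hne hT

lemma exists_circuit_decomp {k : ℕ} :
    ∀ (n : ℕ) (S : Multiset (Finset ℕ)), Multiset.card S ≤ n → IsSimpCycle k S → S ≠ 0 →
    ∃ L : List (Multiset (Finset ℕ)), L ≠ [] ∧ (∀ C ∈ L, IsSimpCircuit k C) ∧ L.sum = S := by
  intro n
  induction n with
  | zero =>
    intro S hcard _ h0
    exact absurd (Multiset.card_eq_zero.1 (Nat.le_zero.1 hcard)) h0
  | succ n ih =>
    intro S hcard hcyc h0
    by_cases hcirc : IsSimpCircuit k S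
    · exact ⟨[S], by simp, by simp [hcirc], by simp⟩
    · have : ∃ T, T ≤ S ∧ T ≠ 0 ∧ T ≠ S ∧ IsSimpCycle k T := by
        by_contra hcon
        push_neg at hcon
        exact hcirc ⟨hcyc, h0, fun T h1 h2 h3 => hcon T h1 h2 h3⟩
      obtain ⟨T, hle, hT0, hTS, hTcyc⟩ := this
      have hlt : Multiset.card T < Multiset.card S :=
        Multiset.card_lt_card (lt_of_le_of_ne hle hTS)
      have hpos : 0 < Multiset.card T := Multiset.card_pos.2 hT0
      have hsub : Multiset.card (S - T) ≤ n := by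
        have := Multiset.card_sub hle
        omega
      have hScyc := cycle_sub hcyc hTcyc hle
      by_cases hST0 : S - T = 0
      · have : S ≤ T := tsub_eq_zero_iff_le.1 hST0
        exact absurd (le_antisymm hle this) hTS
      · obtain ⟨L1, hL1ne, hL1c, hL1s⟩ := ih T (by omega) hTcyc hT0
        obtain ⟨L2, _, hL2c, hL2s⟩ := ih (S - T) hsub hScyc hST0
        refine ⟨L1 ++ L2, by simp [hL1ne], ?_, ?_⟩
        · intro C hC
          rcases List.mem_append.1 hC with h | h
          exacts [hL1c C h, hL2c C h]
        · rw [List.sum_append, hL1s, hL2s, add_comm]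
          exact tsub_add_cancel_of_le hle

lemma circuit_nodup {k : ℕ} {S : Multiset (Finset ℕ)} (hS : IsSimpCircuit k S)
    (hnt : ¬ IsTrivialSimpCircuit S) : S.Nodup := by
  rw [Multiset.nodup_iff_count_le_one]
  by_contra hcon
  push_neg at hcon
  obtain ⟨U, hU⟩ := hcon
  have hmem : U ∈ S := Multiset.count_pos.1 (by omega)
  have hle : ({U, U} : Multiset (Finset ℕ)) ≤ S := by
    rw [Multiset.le_iff_count]
    intro a
    by_cases ha : a = U
    · subst ha; simp; omega
    · simp [Multiset.count_cons, Multiset.count_singleton, ha]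
  have hcyc : IsSimpCycle k ({U, U} : Multiset (Finset ℕ)) := by
    constructor
    · intro W hW
      rcases Multiset.mem_cons.1 hW with rfl | hW'
      · exact hS.1.1 W hmem
      · rw [Multiset.mem_singleton.1 hW']; exact hS.1.1 U hmem
    · intro F _
      show Even (Multiset.countP _ (U ::ₘ {U}))
      rw [Multiset.countP_cons]
      have : ({U} : Multiset (Finset ℕ)) = U ::ₘ 0 := rfl
      rw [this, Multiset.countP_cons, Multiset.countP_zero]
      split <;> simp
  have h0 : ({U, U} : Multiset (Finset ℕ)) ≠ 0 := by simp
  have := circuit_eq_of_subcycle hS hcyc hle h0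
  exact hnt ⟨U, this.symm⟩

lemma no_uv_cycle {k u v : ℕ} (hne : u ≠ v) {B : Multiset (Finset ℕ)} (hnd : B.Nodup)
    (hB : ∀ K ∈ B, u ∈ K ∧ v ∈ K) (hmc : IsMultiComplex k B)
    (hcyc : ∀ F : Finset ℕ, F.card = k → Even (simplexCount B F)) (h0 : B ≠ 0) : False := by
  obtain ⟨K, hK⟩ := Multiset.exists_mem_of_ne_zero h0
  have hvK : v ∈ K := (hB K hK).2
  have hFcard : (K.erase v).card = k := by
    rw [Finset.card_erase_of_mem hvK, hmc K hK]; omega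
  have h1 : simplexCount B (K.erase v) = Multiset.count K B := by
    rw [simplexCount]
    rw [show (Multiset.count K B) = Multiset.countP (fun U => K = U) B from rfl]
    refine Multiset.countP_congr rfl fun K' hK' => propext ?_
    constructor
    · intro hsub
      have h2 : K ⊆ K' := by
        rw [← Finset.insert_erase hvK]
        exact Finset.insert_subset (hB K' hK').2 hsub
      exact Finset.eq_of_subset_of_card_le h2 (by rw [hmc K hK, hmc K' hK'])
    · rintro rfl
      exact Finset.erase_subset _ _
  have h2 := hcyc _ hFcard
  rw [h1] at h2
  have h3 : Multiset.count K B = 1 :=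
    le_antisymm (Multiset.nodup_iff_count_le_one.1 hnd K) (Multiset.count_pos.2 hK)
  rw [h3] at h2
  simp at h2

lemma exists_le_of_le_map' {α β : Type*} [DecidableEq α] [DecidableEq β] (f : α → β) :
    ∀ (s : Multiset α) (t : Multiset β), t ≤ s.map f → ∃ t', t' ≤ s ∧ t'.map f = t := by
  intro s
  induction s using Multiset.induction_on with
  | empty => intro t ht; simp only [Multiset.map_zero, Multiset.le_zero] at ht
             exact ⟨0, le_rfl, by simp [ht]⟩
  | cons a s ih =>
    intro t ht
    rw [Multiset.map_cons] at ht
    by_cases hfa : f a ∈ t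
    · have h1 : t.erase (f a) ≤ s.map f := by
        rw [Multiset.le_iff_count]
        intro b
        have := Multiset.le_iff_count.mp ht b
        rw [Multiset.count_cons] at this
        by_cases hb : b = f a
        · subst hb; rw [Multiset.count_erase_self]; simp at this; omega
        · rw [Multiset.count_erase_of_ne hb]; simp [hb] at this; omega
      obtain ⟨t', ht', hmap⟩ := ih _ h1
      refine ⟨a ::ₘ t', Multiset.cons_le_cons a ht', ?_⟩
      rw [Multiset.map_cons, hmap, Multiset.cons_erase hfa]
    · have h1 : t ≤ s.map f := by
        rw [Multiset.le_iff_count]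
        intro b
        have := Multiset.le_iff_count.mp ht b
        rw [Multiset.count_cons] at this
        split at this <;> rename_i hb
        · subst hb; rw [Multiset.count_eq_zero_of_notMem hfa]; omega
        · omega
      obtain ⟨t', ht', hmap⟩ := ih _ h1
      exact ⟨t', le_trans ht' (Multiset.le_cons_self s a), hmap⟩

lemma exists_fin_decomp {α β : Type*} [DecidableEq α] [DecidableEq β] (f : α → β) :
    ∀ (m : ℕ) (C : Fin m → Multiset β) (P : Multiset α), P.map f = ∑ i, C i →
    ∃ Pf : Fin m → Multiset α, (∀ i, (Pf i).map f = C i) ∧ ∑ i, Pf i = P := by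
  intro m
  induction m with
  | zero =>
    intro C P h
    simp only [Finset.univ_eq_empty, Finset.sum_empty] at h
    exact ⟨fun i => i.elim0, fun i => i.elim0, by simp [Multiset.map_eq_zero.1 h]⟩
  | succ m ih =>
    intro C P h
    rw [Fin.sum_univ_succ] at h
    obtain ⟨P1, hP1le, hP1map⟩ := exists_le_of_le_map' f P (C 0)
      (by rw [h]; exact le_add_right le_rfl)
    have hsplit : P1 + (P - P1) = P := add_tsub_cancel_of_le hP1le
    have h2 : (P - P1).map f = ∑ i : Fin m, C i.succ := by
      have hx : P.map f = P1.map f + (P - P1).map f := by rw [← Multiset.map_add, hsplit]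
      rw [h, hP1map] at hx
      exact (add_left_cancel hx).symm
    obtain ⟨Pf', hmap', hsum'⟩ := ih (fun i => C i.succ) (P - P1) h2
    refine ⟨Fin.cases P1 Pf', fun i => ?_, ?_⟩
    · induction i using Fin.cases with
      | zero => simpa using hP1map
      | succ j => simpa using hmap' j
    · rw [Fin.sum_univ_succ]
      simp only [Fin.cases_zero, Fin.cases_succ]
      rw [hsum', hsplit]

lemma even_multiset_sum {m : Multiset ℕ} (h : ∀ x ∈ m, Even x) : Even m.sum := by
  induction m using Multiset.induction_on with
  | empty => simp
  | cons a s ih =>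
    rw [Multiset.sum_cons]
    exact Even.add (h a (Multiset.mem_cons_self a s))
      (ih fun x hx => h x (Multiset.mem_cons_of_mem hx))

lemma countP_finsum {α β : Type*} (p : α → Prop) [DecidablePred p] (A : Finset β)
    (g : β → Multiset α) :
    Multiset.countP p (∑ i ∈ A, g i) = ∑ i ∈ A, Multiset.countP p (g i) := by
  induction A using Finset.cons_induction with
  | empty => simp
  | cons a A ha ih => rw [Finset.sum_cons, Finset.sum_cons, Multiset.countP_add, ih]

lemma even_filter_card_iff {β : Type*} (A : Finset β) (f : β → ℕ) :
    Even ((A.filter fun b => Odd (f b)).card) ↔ Even (∑ b ∈ A, f b) := by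
  induction A using Finset.cons_induction with
  | empty => simp
  | cons a A ha ih =>
    rw [Finset.filter_cons, Finset.sum_cons]
    by_cases h : Odd (f a)
    · simp only [h, if_pos]
      rw [Finset.card_cons, Nat.even_add_one, Nat.even_add]
      rw [Nat.not_even_iff_odd.symm] at h
      tauto
    · simp only [h, if_neg, not_false_iff]
      rw [Nat.even_add]
      rw [Nat.not_even_iff_odd.symm, not_not] at h
      tauto

lemma sum_countP_swap {β : Type*} (A : Finset β) (p : β → Finset ℕ → Prop)
    [∀ x, DecidablePred (p x)] (m : Multiset (Finset ℕ)) :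
    ∑ x ∈ A, Multiset.countP (p x) m
      = (m.map fun U => (A.filter fun x => p x U).card).sum := by
  induction m using Multiset.induction_on with
  | empty => simp
  | cons U m ih =>
    simp only [Multiset.countP_cons, Multiset.map_cons, Multiset.sum_cons,
      Finset.sum_add_distrib, ih]
    rw [add_comm]
    congr 1
    rw [Finset.card_filter]

lemma odd_filter_card_iff {β : Type*} (A : Finset β) (f : β → ℕ) :
    Odd ((A.filter fun b => Odd (f b)).card) ↔ Odd (∑ b ∈ A, f b) := by
  rw [← Nat.not_even_iff_odd, ← Nat.not_even_iff_odd]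
  exact not_congr (even_filter_card_iff A f)

lemma countP_eq_mem_ite {α : Type*} [DecidableEq α] {X : α} {q : Multiset α} (hnd : q.Nodup) :
    Multiset.countP (fun K => K = X) q = if X ∈ q then 1 else 0 := by
  rw [Multiset.countP_eq_card_filter, Multiset.filter_eq', Multiset.card_replicate]
  by_cases h : X ∈ q
  · rw [if_pos h, Multiset.count_eq_one_of_mem hnd h]
  · rw [if_neg h, Multiset.count_eq_zero_of_notMem h]

lemma countP_eq_count {α : Type*} [DecidableEq α] (X : α) (q : Multiset α) :
    Multiset.countP (fun K => K = X) q = Multiset.count X q := by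
  rw [Multiset.countP_eq_card_filter, Multiset.filter_eq', Multiset.card_replicate]

lemma count_finsum {α β : Type*} [DecidableEq α] (a : α) (A : Finset β)
    (g : β → Multiset α) :
    Multiset.count a (∑ i ∈ A, g i) = ∑ i ∈ A, Multiset.count a (g i) := by
  induction A using Finset.cons_induction with
  | empty => simp
  | cons b A hb ih => rw [Finset.sum_cons, Finset.sum_cons, Multiset.count_add, ih]

end FD

/-- The link of an edge `uv` of `S`. -/
def linkS (S : Multiset (Finset ℕ)) (u v : ℕ) : Multiset (Finset ℕ) :=
  (S.filter fun U => u ∈ U ∧ v ∈ U).map fun U => U \ {u, v}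

/-- `S` is strongly connected: any two simplices are joined by a sequence of simplices of `S`
in which consecutive simplices share at least `k` vertices. -/
def StronglyConnectedS (k : ℕ) (S : Multiset (Finset ℕ)) : Prop :=
  ∀ U ∈ S, ∀ W ∈ S,
    Relation.ReflTransGen (fun A B => A ∈ S ∧ B ∈ S ∧ k ≤ (A ∩ B).card) U W

/-- A `k`-pseudomanifold: a nonempty strongly connected simplicial `k`-complex in which every
`k`-element subset of a simplex is contained in exactly two simplices. -/
def IsPseudomanifold (k : ℕ) (S : Multiset (Finset ℕ)) : Prop :=
  S.Nodup ∧ IsMultiComplex k S ∧ S ≠ 0 ∧ StronglyConnectedS k S ∧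
    ∀ F : Finset ℕ, F.card = k → (∃ U ∈ S, F ⊆ U) → simplexCount S F = 2

/-- Stacked `k`-spheres: obtained from the boundary of a `(k+1)`-simplex by repeated
barycentric subdivisions of facets. -/
inductive IsStackedSphere : ℕ → Multiset (Finset ℕ) → Prop
  | base (k : ℕ) (W : Finset ℕ) (hW : W.card = k + 2) :
      IsStackedSphere k (W.powersetCard (k + 1)).val
  | subdiv (k : ℕ) (S : Multiset (Finset ℕ)) (U : Finset ℕ) (w : ℕ)
      (hS : IsStackedSphere k S) (hU : U ∈ S) (hw : w ∉ vertexSet S) :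
      IsStackedSphere k (symmDiffM S ((insert w U).powersetCard (k + 1)).val)

/-- `S` is a copy of the simplicial `k`-circuit `ℒ_k`. -/
def IsCopyOfL (k : ℕ) (S : Multiset (Finset ℕ)) : Prop :=
  ∃ (U : Finset ℕ) (x y : ℕ), U.card = k + 1 ∧ x ∉ U ∧ y ∉ U ∧ x ≠ y ∧
    vertexSet S = U ∪ {x, y} ∧
    S = ((U.image fun w => insert x (U.erase w)) ∪ (U.image fun w => insert y (U.erase w))).val

open scoped Classical in
/-- The family `S†`: all `(k+1)`-element subsets `K` of `V(S)` containing `u` and `v` such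
that both `K∖{u}` and `K∖{v}` are contained in some simplex of `S`. -/
noncomputable def faceDag (k : ℕ) (S : Multiset (Finset ℕ)) (u v : ℕ) : Multiset (Finset ℕ) :=
  ((vertexSet S).powersetCard (k + 1)).val.filter fun K =>
    u ∈ K ∧ v ∈ K ∧ (∃ U ∈ S, K.erase u ⊆ U) ∧ (∃ U ∈ S, K.erase v ⊆ U)

open scoped Classical in
/-- The family `S*`: the members `K` of `S†` with `K∖{u}` and `K∖{v}` in the boundary of `S`. -/
noncomputable def faceStar (k : ℕ) (S : Multiset (Finset ℕ)) (u v : ℕ) : Multiset (Finset ℕ) :=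
  (faceDag k S u v).filter fun K =>
    K.erase u ∈ boundarySet k S ∧ K.erase v ∈ boundarySet k S

/-! ### Finite graphs with vertices in ℕ -/

/-- A finite simple graph with vertex set a finite subset of `ℕ`. -/
structure FinGraph : Type where
  verts : Finset ℕ
  Adj : ℕ → ℕ → Prop
  symm : ∀ ⦃x y⦄, Adj x y → Adj y x
  loopless : ∀ x, ¬ Adj x x
  adj_mem : ∀ ⦃x y⦄, Adj x y → x ∈ verts ∧ y ∈ verts

namespace FinGraph

/-- The number of edges of `G`. -/
noncomputable def edgeCount (G : FinGraph) : ℕ := (Sym2.fromRel (r := G.Adj) ⟨fun _ _ h => G.symm h⟩).ncard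

/-- `G` is connected. -/
def Connected (G : FinGraph) : Prop :=
  G.verts.Nonempty ∧ ∀ x ∈ G.verts, ∀ y ∈ G.verts, Relation.ReflTransGen G.Adj x y

/-- Deletion of a set of vertices. -/
def deleteVerts (G : FinGraph) (K : Finset ℕ) : FinGraph where
  verts := G.verts \ K
  Adj x y := G.Adj x y ∧ x ∉ K ∧ y ∉ K
  symm := by
    rintro x y ⟨h, hx, hy⟩
    exact ⟨G.symm h, hy, hx⟩
  loopless := by
    rintro x ⟨h, -, -⟩
    exact G.loopless x h
  adj_mem := by
    rintro x y ⟨h, hx, hy⟩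
    exact ⟨Finset.mem_sdiff.2 ⟨(G.adj_mem h).1, hx⟩, Finset.mem_sdiff.2 ⟨(G.adj_mem h).2, hy⟩⟩

/-- `G` is `m`-connected: it has at least `m+1` vertices and deleting any set of fewer than
`m` vertices leaves a connected graph. -/
def ConnectedGE (m : ℕ) (G : FinGraph) : Prop :=
  m + 1 ≤ G.verts.card ∧ ∀ K : Finset ℕ, K.card < m → (G.deleteVerts K).Connected

/-- `G` is a complete graph on `n` vertices. -/
def IsCompleteOn (G : FinGraph) (n : ℕ) : Prop :=
  G.verts.card = n ∧ ∀ x ∈ G.verts, ∀ y ∈ G.verts, x ≠ y → G.Adj x y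

/-- `H` is a subgraph of `G`. -/
def IsSubgraph (H G : FinGraph) : Prop :=
  H.verts ⊆ G.verts ∧ ∀ ⦃x y⦄, H.Adj x y → G.Adj x y

/-- `X` is a clique of `G`. -/
def IsClique (G : FinGraph) (X : Finset ℕ) : Prop :=
  X ⊆ G.verts ∧ ∀ x ∈ X, ∀ y ∈ X, x ≠ y → G.Adj x y

/-- The union of two graphs. -/
def union (G H : FinGraph) : FinGraph where
  verts := G.verts ∪ H.verts
  Adj x y := G.Adj x y ∨ H.Adj x y
  symm := by
    rintro x y (h | h)
    exacts [Or.inl (G.symm h), Or.inr (H.symm h)]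
  loopless := by
    rintro x (h | h)
    exacts [G.loopless x h, H.loopless x h]
  adj_mem := by
    rintro x y (h | h)
    · exact ⟨Finset.mem_union_left _ (G.adj_mem h).1, Finset.mem_union_left _ (G.adj_mem h).2⟩
    · exact ⟨Finset.mem_union_right _ (H.adj_mem h).1, Finset.mem_union_right _ (H.adj_mem h).2⟩

/-- Adding the edge `uv` to `G` (for vertices `u ≠ v` of `G`). -/
def addEdge (G : FinGraph) (u v : ℕ) : FinGraph where
  verts := G.verts
  Adj x y := G.Adj x y ∨
    (x ≠ y ∧ x ∈ G.verts ∧ y ∈ G.verts ∧ ((x = u ∧ y = v) ∨ (x = v ∧ y = u)))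
  symm := by
    rintro x y (h | ⟨hxy, hx, hy, h | h⟩)
    · exact Or.inl (G.symm h)
    · exact Or.inr ⟨hxy.symm, hy, hx, Or.inr ⟨h.2, h.1⟩⟩
    · exact Or.inr ⟨hxy.symm, hy, hx, Or.inl ⟨h.2, h.1⟩⟩
  loopless := by
    rintro x (h | ⟨hxx, -⟩)
    · exact G.loopless x h
    · exact hxx rfl
  adj_mem := by
    rintro x y (h | ⟨-, hx, hy, -⟩)
    · exact G.adj_mem h
    · exact ⟨hx, hy⟩

/-- Adding a set `B` of unordered pairs of vertices to `G` as edges. -/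
def addEdges (G : FinGraph) (B : Finset (Sym2 ℕ)) : FinGraph where
  verts := G.verts
  Adj x y := G.Adj x y ∨ (x ≠ y ∧ x ∈ G.verts ∧ y ∈ G.verts ∧ s(x, y) ∈ B)
  symm := by
    rintro x y (h | ⟨hxy, hx, hy, hB⟩)
    · exact Or.inl (G.symm h)
    · exact Or.inr ⟨hxy.symm, hy, hx, by rwa [Sym2.eq_swap]⟩
  loopless := by
    rintro x (h | ⟨hxx, -⟩)
    · exact G.loopless x h
    · exact hxx rfl
  adj_mem := by
    rintro x y (h | ⟨-, hx, hy, -⟩)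
    · exact G.adj_mem h
    · exact ⟨hx, hy⟩

/-- Deleting the edge `uv` from `G`. -/
def deleteEdge (G : FinGraph) (u v : ℕ) : FinGraph where
  verts := G.verts
  Adj x y := G.Adj x y ∧ ¬ ((x = u ∧ y = v) ∨ (x = v ∧ y = u))
  symm := by
    rintro x y ⟨h, hne⟩
    refine ⟨G.symm h, fun hc => hne ?_⟩
    rcases hc with ⟨h1, h2⟩ | ⟨h1, h2⟩
    · exact Or.inr ⟨h2, h1⟩
    · exact Or.inl ⟨h2, h1⟩
  loopless := by
    rintro x ⟨h, -⟩
    exact G.loopless x h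
  adj_mem := by
    rintro x y ⟨h, -⟩
    exact G.adj_mem h

/-- The contraction `G/uv`: delete `v` and join `u` to every former neighbour of `v`
other than `u`. -/
def contract (G : FinGraph) (u v : ℕ) : FinGraph where
  verts := G.verts.erase v
  Adj x y := x ≠ y ∧ x ∈ G.verts ∧ y ∈ G.verts ∧ x ≠ v ∧ y ≠ v ∧
    (G.Adj x y ∨ (x = u ∧ G.Adj v y) ∨ (y = u ∧ G.Adj v x))
  symm := by
    rintro x y ⟨hxy, hx, hy, hxv, hyv, h⟩
    refine ⟨hxy.symm, hy, hx, hyv, hxv, ?_⟩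
    rcases h with h | h | h
    · exact Or.inl (G.symm h)
    · exact Or.inr (Or.inr h)
    · exact Or.inr (Or.inl h)
  loopless := by
    rintro x ⟨hxx, -⟩
    exact hxx rfl
  adj_mem := by
    rintro x y ⟨hxy, hx, hy, hxv, hyv, -⟩
    exact ⟨Finset.mem_erase.2 ⟨hxv, hx⟩, Finset.mem_erase.2 ⟨hyv, hy⟩⟩

/-! ### Rigidity notions -/

/-- A realisation of `G` in `ℝ^d` is generic if the coordinates of the positions of the
vertices of `G` are algebraically independent over `ℚ`. -/
def IsGeneric (d : ℕ) (G : FinGraph) (p : ℕ → EuclideanSpace ℝ (Fin d)) : Prop :=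
  AlgebraicIndependent ℚ fun vi : {x // x ∈ G.verts} × Fin d => p vi.1.1 vi.2

/-- `q` is an infinitesimal motion of `(G, p)`. -/
def IsInfMotion (d : ℕ) (G : FinGraph) (p q : ℕ → EuclideanSpace ℝ (Fin d)) : Prop :=
  ∀ ⦃x y⦄, G.Adj x y → inner ℝ (q x - q y) (p x - p y) = (0 : ℝ)

/-- `q` is a trivial motion of `(G, p)`: it agrees on the vertices of `G` with a map of the
form `v ↦ A (p v) + b` with `A` skew-symmetric. -/
def IsTrivialMotion (d : ℕ) (G : FinGraph) (p q : ℕ → EuclideanSpace ℝ (Fin d)) : Prop :=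
  ∃ (A : EuclideanSpace ℝ (Fin d) →ₗ[ℝ] EuclideanSpace ℝ (Fin d))
    (b : EuclideanSpace ℝ (Fin d)),
      (∀ x y : EuclideanSpace ℝ (Fin d), (inner ℝ (A x) y : ℝ) = -(inner ℝ x (A y) : ℝ)) ∧
        ∀ v ∈ G.verts, q v = A (p v) + b

/-- `(G, p)` is infinitesimally rigid. -/
def IsInfRigid (d : ℕ) (G : FinGraph) (p : ℕ → EuclideanSpace ℝ (Fin d)) : Prop :=
  ∀ q : ℕ → EuclideanSpace ℝ (Fin d), IsInfMotion d G p q → IsTrivialMotion d G p q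

/-- `G` is rigid in `ℝ^d`: every generic realisation is infinitesimally rigid. -/
def IsRigid (d : ℕ) (G : FinGraph) : Prop :=
  ∀ p : ℕ → EuclideanSpace ℝ (Fin d), G.IsGeneric d p → G.IsInfRigid d p

/-- Two realisations are equivalent if corresponding edges have equal lengths. -/
def Equivalent (d : ℕ) (G : FinGraph) (p q : ℕ → EuclideanSpace ℝ (Fin d)) : Prop :=
  ∀ ⦃x y⦄, G.Adj x y → ‖p x - p y‖ = ‖q x - q y‖

/-- Two realisations are congruent if all pairs of vertices are at equal distances. -/
def Congruent (d : ℕ) (G : FinGraph) (p q : ℕ → EuclideanSpace ℝ (Fin d)) : Prop :=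
  ∀ x ∈ G.verts, ∀ y ∈ G.verts, ‖p x - p y‖ = ‖q x - q y‖

/-- `G` is globally rigid in `ℝ^d`. -/
def IsGloballyRigid (d : ℕ) (G : FinGraph) : Prop :=
  ∀ p q : ℕ → EuclideanSpace ℝ (Fin d),
    G.IsGeneric d p → G.Equivalent d p q → G.Congruent d p q

/-- `G` is `uv`-coincident rigid in `ℝ^d`: some realisation with `p u = p v` is
infinitesimally rigid. -/
def IsCoincidentRigid (d : ℕ) (G : FinGraph) (u v : ℕ) : Prop :=
  ∃ p : ℕ → EuclideanSpace ℝ (Fin d), p u = p v ∧ G.IsInfRigid d p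

end FinGraph

/-- The graph `G(S)` of a simplicial multicomplex `S`. -/
def graphOf (S : Multiset (Finset ℕ)) : FinGraph where
  verts := vertexSet S
  Adj x y := x ≠ y ∧ ∃ U ∈ S, x ∈ U ∧ y ∈ U
  symm := by
    rintro x y ⟨hxy, U, hU, hx, hy⟩
    exact ⟨hxy.symm, U, hU, hy, hx⟩
  loopless := by
    rintro x ⟨hxx, -⟩
    exact hxx rfl
  adj_mem := by
    rintro x y ⟨hxy, U, hU, hx, hy⟩
    exact ⟨mem_vertexSet_of_mem hU hx, mem_vertexSet_of_mem hU hy⟩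

/-! ### Cleavage properties -/

/-- The `d`-cleavage property: `G` is `d`-connected and every `d`-element vertex set whose
removal disconnects `G` induces a clique of `G`. -/
def HasCleavage (d : ℕ) (G : FinGraph) : Prop :=
  G.ConnectedGE d ∧ ∀ X : Finset ℕ, X ⊆ G.verts → X.card = d →
    ¬ (G.deleteVerts X).Connected → G.IsClique X

/-- A `(d+1)`-block of `G`: a subgraph that is a complete graph on `d+1` vertices or is
`(d+1)`-connected, and is maximal among subgraphs of `G` with this property. -/
def IsBlock (d : ℕ) (G D : FinGraph) : Prop :=
  D.IsSubgraph G ∧ (D.IsCompleteOn (d + 1) ∨ D.ConnectedGE (d + 1)) ∧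
    ∀ D' : FinGraph, D'.IsSubgraph G → (D'.IsCompleteOn (d + 1) ∨ D'.ConnectedGE (d + 1)) →
      D.IsSubgraph D' → D' = D

/-- The strong `d`-cleavage property (for `d ≥ 4`): the `d`-cleavage property, and every
`(d+1)`-block is globally rigid in `ℝ^d`. -/
def HasStrongCleavage (d : ℕ) (G : FinGraph) : Prop :=
  HasCleavage d G ∧ ∀ D : FinGraph, IsBlock d G D → D.IsGloballyRigid d

theorem fogelsanger_decomposition (k : ℕ) (hk : 2 ≤ k)
    (S : Multiset (Finset ℕ)) (hS : IsSimpCircuit k S) (hnt : ¬ IsTrivialSimpCircuit S)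
    (u v : ℕ) (huv : (graphOf S).Adj u v) :
    ∃ (m : ℕ) (Sf : Fin m → Multiset (Finset ℕ)), 1 ≤ m ∧
      (∀ i, IsSimpCircuit k (Sf i) ∧ ¬ IsTrivialSimpCircuit (Sf i)) ∧
      (∀ i, IsSimpCircuit k (contractS (Sf i) u v)) ∧
      (∀ i, ∀ K ∈ Sf i, K ∉ S →
        K.card = k + 1 ∧ u ∈ K ∧ v ∈ K ∧ (graphOf S).IsClique K) ∧
      (∀ U ∈ S, ¬ (u ∈ U ∧ v ∈ U) → ∃! i, U ∈ Sf i) ∧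
      (∀ U : Finset ℕ, U ∈ S ↔ Odd ((Finset.univ.filter fun i => U ∈ Sf i).card)) ∧
      (∀ i, (graphOf (Sf i)).Adj u v) ∧
      (∀ x y : ℕ, (∃ i, (graphOf (Sf i)).Adj x y) ↔ (graphOf S).Adj x y) ∧
      (∀ I : Finset (Fin m), I.Nonempty → I ≠ Finset.univ →
        ∃ j ∉ I, ∃ K : Finset ℕ, K.card = k + 1 ∧ u ∈ K ∧ v ∈ K ∧
          (graphOf S).IsClique K ∧ K ∉ S ∧
          Odd ((I.filter fun i => K ∈ Sf i).card) ∧ K ∈ Sf j) := by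
  classical
  obtain ⟨hne, U0, hU0S, hU0u, hU0v⟩ : u ≠ v ∧ ∃ U ∈ S, u ∈ U ∧ v ∈ U := huv
  have hnd : S.Nodup := FD.circuit_nodup hS hnt
  have hmc : IsMultiComplex k S := hS.1.1
  have hcycS := hS.1.2
  have huV : u ∈ vertexSet S := mem_vertexSet_of_mem hU0S hU0u
  have hvV : v ∈ vertexSet S := mem_vertexSet_of_mem hU0S hU0v
  set P : Multiset (Finset ℕ) := S.filter (fun U => ¬ (u ∈ U ∧ v ∈ U)) with hP
  have hPle : P ≤ S := Multiset.filter_le _ S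
  have hPpred : ∀ U ∈ P, ¬ (u ∈ U ∧ v ∈ U) := fun U hU => (Multiset.mem_filter.1 hU).2
  have hT : contractS S u v = P.map (FD.phi u v) := rfl
  have hTcyc : IsSimpCycle k (contractS S u v) := FD.contract_cycle hne hS.1
  have hT0 : contractS S u v ≠ 0 := by
    intro hc
    rw [hT, Multiset.map_eq_zero] at hc
    have hall : ∀ U ∈ S, u ∈ U ∧ v ∈ U := by
      intro U hU
      by_contra hUc
      have : U ∈ P := Multiset.mem_filter.2 ⟨hU, hUc⟩
      rw [hc] at this
      simp at this
    exact FD.no_uv_cycle hne hnd hall hmc hcycS hS.2.1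
  obtain ⟨L, hLne, hLcirc, hLsum⟩ :=
    FD.exists_circuit_decomp (Multiset.card (contractS S u v)) _ le_rfl hTcyc hT0
  set m := L.length with hm
  have hm1 : 1 ≤ m := List.length_pos_iff.2 hLne
  set C : Fin m → Multiset (Finset ℕ) := fun i => L.get i with hC
  have hCsum : (contractS S u v) = ∑ i, C i := by
    rw [← hLsum]
    conv_lhs => rw [← List.ofFn_get L]
    rw [List.sum_ofFn]
  have hCcirc : ∀ i, IsSimpCircuit k (C i) := fun i => hLcirc _ (L.get_mem _)
  obtain ⟨Pf, hPfmap, hPfsum⟩ :=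
    FD.exists_fin_decomp (FD.phi u v) m C P (by rw [← hT]; exact hCsum)
  have hPfle : ∀ i, Pf i ≤ P := by
    intro i
    rw [← hPfsum]
    exact Finset.single_le_sum (f := Pf) (fun _ _ => zero_le) (Finset.mem_univ i)
  have hPfS : ∀ i, Pf i ≤ S := fun i => le_trans (hPfle i) hPle
  have hPfpred : ∀ i, ∀ U ∈ Pf i, ¬ (u ∈ U ∧ v ∈ U) :=
    fun i U hU => hPpred U (Multiset.mem_of_le (hPfle i) hU)
  have hPfnd : ∀ i, (Pf i).Nodup := fun i => Multiset.nodup_of_le (hPfS i) hnd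
  set Q : Fin m → Multiset (Finset ℕ) := fun i =>
    ((vertexSet S).powersetCard (k+1)).val.filter
      (fun K => u ∈ K ∧ v ∈ K ∧ Odd (simplexCount (Pf i) (K.erase v))) with hQ
  have hQmem : ∀ i K, K ∈ Q i ↔ (K ⊆ vertexSet S ∧ K.card = k + 1) ∧ u ∈ K ∧ v ∈ K ∧
      Odd (simplexCount (Pf i) (K.erase v)) := by
    intro i K
    rw [hQ]
    rw [Multiset.mem_filter, Finset.mem_val, Finset.mem_powersetCard]
  have hQnd : ∀ i, (Q i).Nodup :=
    fun i => Multiset.Nodup.filter _ ((vertexSet S).powersetCard (k+1)).nodup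
  set D : Fin m → Multiset (Finset ℕ) := fun i => Pf i + Q i with hD
  have hDnd : ∀ i, (D i).Nodup := by
    intro i
    rw [hD]
    rw [Multiset.nodup_add]
    refine ⟨hPfnd i, hQnd i, Multiset.disjoint_left.2 fun {K} hKP hKQ => ?_⟩
    exact hPfpred i K hKP ⟨((hQmem i K).1 hKQ).2.1, ((hQmem i K).1 hKQ).2.2.1⟩
  -- parity facts from the circuits C i
  have pNeither : ∀ i F, F.card = k → u ∉ F → v ∉ F → Even (simplexCount (Pf i) F) := by
    intro i F hF huF hvF
    have h1 := (hCcirc i).1.2 F hF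
    rwa [← hPfmap i, FD.countR_not_mem hne (hPfpred i) huF hvF] at h1
  have pPair : ∀ i F, F.card = k → u ∈ F → v ∉ F →
      Even (simplexCount (Pf i) F + simplexCount (Pf i) (insert v (F.erase u))) := by
    intro i F hF huF hvF
    have h1 := (hCcirc i).1.2 F hF
    rwa [← hPfmap i, FD.countR_u_mem hne (hPfpred i) huF hvF] at h1
  have oddSub : ∀ i F, Odd (simplexCount (Pf i) F) → ∃ U ∈ Pf i, F ⊆ U := by
    intro i F hodd
    have hpos : 0 < simplexCount (Pf i) F := by
      rcases Nat.eq_zero_or_pos (simplexCount (Pf i) F) with h | h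
      · rw [h] at hodd; simp at hodd
      · exact h
    exact Multiset.countP_pos.1 hpos
  have hQins : ∀ i F, F.card = k → u ∈ F → v ∉ F →
      ((insert v F) ∈ Q i ↔ Odd (simplexCount (Pf i) F)) := by
    intro i F hF huF hvF
    rw [hQmem]
    have he : (insert v F).erase v = F := Finset.erase_insert hvF
    constructor
    · rintro ⟨-, -, -, hodd⟩; rwa [he] at hodd
    · intro hodd
      obtain ⟨U, hUPf, hFU⟩ := oddSub i F hodd
      have hUS : U ∈ S := Multiset.mem_of_le (hPfS i) hUPf
      refine ⟨⟨?_, ?_⟩, Finset.mem_insert_of_mem huF, Finset.mem_insert_self _ _, by rwa [he]⟩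
      · intro x hx
        rcases Finset.mem_insert.1 hx with rfl | hx'
        · exact hvV
        · exact mem_vertexSet_of_mem hUS (hFU hx')
      · rw [Finset.card_insert_of_notMem hvF, hF]
  have hQcount_u : ∀ i F, F.card = k → u ∈ F → v ∉ F →
      simplexCount (Q i) F = if insert v F ∈ Q i then 1 else 0 := by
    intro i F hF huF hvF
    rw [simplexCount]
    have hpt : ∀ K ∈ Q i, (F ⊆ K) = (K = insert v F) := by
      intro K hK
      obtain ⟨⟨hKV, hKc⟩, huK, hvK, -⟩ := (hQmem i K).1 hK
      refine propext ⟨fun hsub => ?_, fun h => h ▸ Finset.subset_insert _ _⟩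
      have h1 : insert v F ⊆ K := Finset.insert_subset hvK hsub
      exact (Finset.eq_of_subset_of_card_le h1
        (by rw [hKc, Finset.card_insert_of_notMem hvF, hF])).symm
    rw [Multiset.countP_congr rfl hpt, FD.countP_eq_mem_ite (hQnd i)]
  have hQcount_v : ∀ i F, F.card = k → u ∉ F → v ∈ F →
      simplexCount (Q i) F = if insert u F ∈ Q i then 1 else 0 := by
    intro i F hF huF hvF
    rw [simplexCount]
    have hpt : ∀ K ∈ Q i, (F ⊆ K) = (K = insert u F) := by
      intro K hK
      obtain ⟨⟨hKV, hKc⟩, huK, hvK, -⟩ := (hQmem i K).1 hK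
      refine propext ⟨fun hsub => ?_, fun h => h ▸ Finset.subset_insert _ _⟩
      have h1 : insert u F ⊆ K := Finset.insert_subset huK hsub
      exact (Finset.eq_of_subset_of_card_le h1
        (by rw [hKc, Finset.card_insert_of_notMem huF, hF])).symm
    rw [Multiset.countP_congr rfl hpt, FD.countP_eq_mem_ite (hQnd i)]
  have hQzero : ∀ i F, F.card = k → u ∉ F → v ∉ F → simplexCount (Q i) F = 0 := by
    intro i F hF huF hvF
    rw [simplexCount, Multiset.countP_eq_zero]
    intro K hK hsub
    obtain ⟨⟨hKV, hKc⟩, huK, hvK, -⟩ := (hQmem i K).1 hK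
    have h1 : insert u (insert v F) ⊆ K := by
      intro x hx
      rcases Finset.mem_insert.1 hx with rfl | hx'
      · exact huK
      rcases Finset.mem_insert.1 hx' with rfl | hx''
      · exact hvK
      · exact hsub hx''
    have h2 := Finset.card_le_card h1
    rw [hKc, Finset.card_insert_of_notMem (by simp [hne, huF]),
      Finset.card_insert_of_notMem hvF, hF] at h2
    omega
  have hQinsv : ∀ i F, F.card = k → u ∉ F → v ∈ F →
      ((insert u F) ∈ Q i ↔ Odd (simplexCount (Pf i) (insert u (F.erase v)))) := by
    intro i F hF huF hvF
    have hpos : 0 < F.card := Finset.card_pos.2 ⟨v, hvF⟩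
    have hFc' : (insert u (F.erase v)).card = k := by
      rw [Finset.card_insert_of_notMem (fun hc => huF (Finset.mem_of_mem_erase hc)),
        Finset.card_erase_of_mem hvF]
      omega
    have hid : insert v (insert u (F.erase v)) = insert u F := by
      rw [Finset.insert_comm, Finset.insert_erase hvF]
    rw [← hid]
    exact hQins i _ hFc' (Finset.mem_insert_self _ _)
      (by simp [Ne.symm hne, Finset.mem_erase])
  have hfin_card : ∀ (s : Finset (Finset ℕ)) (r : Finset ℕ → Prop) [DecidablePred r],
      (s.filter r).card = Multiset.countP r s.val := by
    intro s r _
    rw [Multiset.countP_eq_card_filter]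
    rfl
  have hDcyc : ∀ i, IsSimpCycle k (D i) := by
    intro i
    constructor
    · intro K hK
      rcases Multiset.mem_add.1 hK with h | h
      · exact hmc K (Multiset.mem_of_le (hPfS i) h)
      · exact ((hQmem i K).1 h).1.2
    · intro F hF
      have hsum : simplexCount (D i) F = simplexCount (Pf i) F + simplexCount (Q i) F :=
        Multiset.countP_add _ _ _
      by_cases hvF : v ∈ F
      · by_cases huF : u ∈ F
        · -- u ∈ F and v ∈ F
          have hP0 : simplexCount (Pf i) F = 0 := by
            rw [simplexCount, Multiset.countP_eq_zero]
            intro U hU hsub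
            exact hPfpred i U hU ⟨hsub huF, hsub hvF⟩
          rw [hsum, hP0, zero_add]
          by_cases hFV : F ⊆ vertexSet S
          · set E := F.erase v with hE
            set A := vertexSet S \ F with hA
            have hEcard : E.card = k - 1 := by rw [hE, Finset.card_erase_of_mem hvF, hF]
            have huE : u ∈ E := Finset.mem_erase.2 ⟨hne, huF⟩
            have hcq : simplexCount (Q i) F
                = (A.filter (fun x => Odd (simplexCount (Pf i) (insert x E)))).card := by
              have h1 : simplexCount (Q i) F
                  = (((vertexSet S).powersetCard (k+1)).filter
                      (fun K => F ⊆ K ∧ u ∈ K ∧ v ∈ K ∧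
                        Odd (simplexCount (Pf i) (K.erase v)))).card := by
                rw [simplexCount, hQ, Multiset.countP_filter, hfin_card]
              rw [h1]
              refine (Finset.card_bij (fun x _ => insert x F) ?_ ?_ ?_).symm
              · intro x hx
                obtain ⟨hxA, hxodd⟩ := Finset.mem_filter.1 hx
                obtain ⟨hxV, hxF⟩ := Finset.mem_sdiff.1 hxA
                have hxv : x ≠ v := fun hc => hxF (hc ▸ hvF)
                rw [Finset.mem_filter, Finset.mem_powersetCard]
                refine ⟨⟨Finset.insert_subset hxV hFV, ?_⟩, Finset.subset_insert _ _,
                  Finset.mem_insert_of_mem huF, Finset.mem_insert_of_mem hvF, ?_⟩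
                · rw [Finset.card_insert_of_notMem hxF, hF]
                · rwa [Finset.erase_insert_of_ne hxv]
              · intro x hx y hy hxy
                obtain ⟨hxA, -⟩ := Finset.mem_filter.1 hx
                obtain ⟨-, hxF⟩ := Finset.mem_sdiff.1 hxA
                have hxy' : insert x F = insert y F := hxy
                have : x ∈ insert y F := by rw [← hxy']; exact Finset.mem_insert_self x F
                rcases Finset.mem_insert.1 this with h | h
                · exact h
                · exact absurd h hxF
              · intro K hK
                rw [Finset.mem_filter, Finset.mem_powersetCard] at hK
                obtain ⟨⟨hKV, hKc⟩, hFK, huK, hvK, hodd⟩ := hK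
                have hsd : (K \ F).card = 1 := by
                  rw [Finset.card_sdiff_of_subset hFK, hKc, hF]; omega
                obtain ⟨x, hx⟩ := Finset.card_eq_one.1 hsd
                have hxK : x ∈ K := by
                  have : x ∈ K \ F := hx ▸ Finset.mem_singleton_self x
                  exact (Finset.mem_sdiff.1 this).1
                have hxF : x ∉ F := by
                  have : x ∈ K \ F := hx ▸ Finset.mem_singleton_self x
                  exact (Finset.mem_sdiff.1 this).2
                have hKeq : K = insert x F := by
                  ext y
                  constructor
                  · intro hy
                    by_cases hyF : y ∈ F
                    · exact Finset.mem_insert_of_mem hyF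
                    · have : y ∈ K \ F := Finset.mem_sdiff.2 ⟨hy, hyF⟩
                      rw [hx] at this
                      rw [Finset.mem_singleton.1 this]
                      exact Finset.mem_insert_self _ _
                  · intro hy
                    rcases Finset.mem_insert.1 hy with rfl | hy'
                    · exact hxK
                    · exact hFK hy'
                refine ⟨x, ?_, hKeq.symm⟩
                rw [Finset.mem_filter]
                refine ⟨Finset.mem_sdiff.2 ⟨hKV hxK, hxF⟩, ?_⟩
                have hxv : x ≠ v := fun hc => hxF (hc ▸ hvF)
                rwa [hKeq, Finset.erase_insert_of_ne hxv] at hodd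
            rw [hcq, FD.even_filter_card_iff]
            simp only [simplexCount]
            rw [FD.sum_countP_swap A (fun x U => insert x E ⊆ U) (Pf i)]
            refine FD.even_multiset_sum ?_
            intro c hc
            obtain ⟨U, hU, rfl⟩ := Multiset.mem_map.1 hc
            have hUS : U ∈ S := Multiset.mem_of_le (hPfS i) hU
            by_cases hEU : E ⊆ U
            · have hvU : v ∉ U := fun hvU => hPfpred i U hU ⟨hEU huE, hvU⟩
              have hfe : A.filter (fun x => insert x E ⊆ U) = U \ F := by
                ext x
                simp only [Finset.mem_filter, hA, Finset.mem_sdiff,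
                  Finset.insert_subset_iff]
                constructor
                · rintro ⟨⟨hxV, hxF⟩, hxU, -⟩; exact ⟨hxU, hxF⟩
                · rintro ⟨hxU, hxF⟩
                  exact ⟨⟨mem_vertexSet_of_mem hUS hxU, hxF⟩, hxU, hEU⟩
              rw [hfe]
              have hUF : U ∩ F = E := by
                ext x
                rw [Finset.mem_inter, hE, Finset.mem_erase]
                constructor
                · rintro ⟨hxU, hxF⟩
                  exact ⟨fun hxv => hvU (hxv ▸ hxU), hxF⟩
                · rintro ⟨hxv, hxF⟩
                  exact ⟨hEU (Finset.mem_erase.2 ⟨hxv, hxF⟩), hxF⟩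
              have h3 : (U ∩ F).card + (U \ F).card = U.card :=
                Finset.card_inter_add_card_sdiff U F
              rw [hUF, hEcard, hmc U hUS] at h3
              have h4 : (U \ F).card = 2 := by omega
              rw [h4]
              exact even_two
            · have h5 : A.filter (fun x => insert x E ⊆ U) = ∅ := by
                rw [Finset.filter_eq_empty_iff]
                intro x _ hc2
                exact hEU (fun y hy => hc2 (Finset.mem_insert_of_mem hy))
              rw [h5]
              simp
          · have h6 : simplexCount (Q i) F = 0 := by
              rw [simplexCount, Multiset.countP_eq_zero]
              intro K hK hsub
              exact hFV (subset_trans hsub ((hQmem i K).1 hK).1.1)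
            rw [h6]
            exact Even.zero
        · -- v ∈ F, u ∉ F
          have hpos : 0 < F.card := Finset.card_pos.2 ⟨v, hvF⟩
          have hFc' : (insert u (F.erase v)).card = k := by
            rw [Finset.card_insert_of_notMem (fun hc => huF (Finset.mem_of_mem_erase hc)),
              Finset.card_erase_of_mem hvF]
            omega
          have hpp := pPair i (insert u (F.erase v)) hFc' (Finset.mem_insert_self _ _)
            (by simp [Ne.symm hne, Finset.mem_erase])
          rw [FD.hat_hat huF hvF] at hpp
          rw [hsum, hQcount_v i F hF huF hvF]
          by_cases hmemq : insert u F ∈ Q i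
          · rw [if_pos hmemq]
            have hodd := (hQinsv i F hF huF hvF).1 hmemq
            simp only [Nat.even_iff, Nat.odd_iff] at hpp hodd ⊢
            omega
          · rw [if_neg hmemq]
            have hodd : ¬ Odd (simplexCount (Pf i) (insert u (F.erase v))) :=
              fun h => hmemq ((hQinsv i F hF huF hvF).2 h)
            simp only [Nat.even_iff, Nat.odd_iff, Nat.not_odd_iff] at hpp hodd ⊢
            omega
      · by_cases huF : u ∈ F
        · -- u ∈ F, v ∉ F
          have hpp := pPair i F hF huF hvF
          rw [hsum, hQcount_u i F hF huF hvF]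
          by_cases hmemq : insert v F ∈ Q i
          · rw [if_pos hmemq]
            have hodd := (hQins i F hF huF hvF).1 hmemq
            simp only [Nat.even_iff, Nat.odd_iff] at hodd ⊢
            omega
          · rw [if_neg hmemq]
            have hodd : ¬ Odd (simplexCount (Pf i) F) :=
              fun h => hmemq ((hQins i F hF huF hvF).2 h)
            simp only [Nat.even_iff, Nat.not_odd_iff] at hodd ⊢
            omega
        · rw [hsum, hQzero i F hF huF hvF, add_zero]
          exact pNeither i F hF huF hvF
  have halluv : ∀ (X : Multiset (Finset ℕ)), contractS X u v = 0 → ∀ K ∈ X, u ∈ K ∧ v ∈ K := by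
    intro X h0 K hK
    by_contra hKc
    have hKf : K ∈ X.filter (fun U => ¬ (u ∈ U ∧ v ∈ U)) := Multiset.mem_filter.2 ⟨hK, hKc⟩
    have h2 : FD.phi u v K ∈ contractS X u v := by
      rw [FD.contractS_eq_map]
      exact Multiset.mem_map_of_mem _ hKf
    rw [h0] at h2
    simp at h2
  have hcontract : ∀ i, contractS (D i) u v = C i := by
    intro i
    rw [FD.contractS_eq_map, hD]
    simp only []
    rw [Multiset.filter_add, Multiset.map_add,
      Multiset.filter_eq_self.2 (hPfpred i),
      Multiset.filter_eq_nil.2 (fun K hK =>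
        not_not_intro ⟨((hQmem i K).1 hK).2.1, ((hQmem i K).1 hK).2.2.1⟩),
      Multiset.map_zero, add_zero, hPfmap i]
  have hC0 : ∀ i, C i ≠ 0 := fun i => (hCcirc i).2.1
  have hPf0 : ∀ i, Pf i ≠ 0 := by
    intro i hc
    apply hC0 i
    rw [← hPfmap i, hc]
    simp
  have hQ0' : ∀ i, Q i ≠ 0 := by
    intro i hQ0
    have hPicyc : IsSimpCycle k (Pf i) := by
      constructor
      · exact fun U hU => hmc U (Multiset.mem_of_le (hPfS i) hU)
      · intro F hF
        by_cases hvF : v ∈ F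
        · by_cases huF : u ∈ F
          · have h0 : simplexCount (Pf i) F = 0 := by
              rw [simplexCount, Multiset.countP_eq_zero]
              intro U hU hsub
              exact hPfpred i U hU ⟨hsub huF, hsub hvF⟩
            rw [h0]
            exact Even.zero
          · by_contra hodd
            rw [Nat.not_even_iff_odd] at hodd
            have hpos : 0 < F.card := Finset.card_pos.2 ⟨v, hvF⟩
            have hFc' : (insert u (F.erase v)).card = k := by
              rw [Finset.card_insert_of_notMem (fun hc => huF (Finset.mem_of_mem_erase hc)),
                Finset.card_erase_of_mem hvF]
              omega
            have hpp := pPair i (insert u (F.erase v)) hFc' (Finset.mem_insert_self _ _)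
              (by simp [Ne.symm hne, Finset.mem_erase])
            rw [FD.hat_hat huF hvF] at hpp
            have hodd' : Odd (simplexCount (Pf i) (insert u (F.erase v))) := by
              simp only [Nat.even_iff, Nat.odd_iff] at hpp hodd ⊢
              omega
            have hmem := (hQinsv i F hF huF hvF).2 hodd'
            rw [hQ0] at hmem
            simp at hmem
        · by_cases huF : u ∈ F
          · by_contra hodd
            rw [Nat.not_even_iff_odd] at hodd
            have hmem := (hQins i F hF huF hvF).2 hodd
            rw [hQ0] at hmem
            simp at hmem
          · exact pNeither i F hF huF hvF
    have heq := FD.circuit_eq_of_subcycle hS hPicyc (hPfS i) (hPf0 i)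
    have hU0Pi : U0 ∈ Pf i := heq ▸ hU0S
    exact hPfpred i U0 hU0Pi ⟨hU0u, hU0v⟩
  have hclique : ∀ i K, K ∈ Q i →
      K.card = k + 1 ∧ u ∈ K ∧ v ∈ K ∧ (graphOf S).IsClique K := by
    intro i K hK
    obtain ⟨⟨hKV, hKc⟩, huK, hvK, hodd⟩ := (hQmem i K).1 hK
    obtain ⟨U1, hU1, hsub1⟩ := oddSub i _ hodd
    have hU1S : U1 ∈ S := Multiset.mem_of_le (hPfS i) hU1
    have hKeraseu : Odd (simplexCount (Pf i) (K.erase u)) := by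
      have hFc : (K.erase v).card = k := by rw [Finset.card_erase_of_mem hvK, hKc]; omega
      have huKe : u ∈ K.erase v := Finset.mem_erase.2 ⟨hne, huK⟩
      have hvKe : v ∉ K.erase v := Finset.notMem_erase _ _
      have hpp := pPair i (K.erase v) hFc huKe hvKe
      have hid : insert v ((K.erase v).erase u) = K.erase u := by
        rw [Finset.erase_right_comm,
          Finset.insert_erase (Finset.mem_erase.2 ⟨Ne.symm hne, hvK⟩)]
      rw [hid] at hpp
      simp only [Nat.even_iff, Nat.odd_iff] at hpp hodd ⊢
      omega
    obtain ⟨U2, hU2, hsub2⟩ := oddSub i _ hKeraseu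
    have hU2S : U2 ∈ S := Multiset.mem_of_le (hPfS i) hU2
    refine ⟨hKc, huK, hvK, hKV, ?_⟩
    intro x hx y hy hxy
    by_cases hxv : x = v
    · subst hxv
      by_cases hyu : y = u
      · subst hyu
        exact ⟨hxy, U0, hU0S, hU0v, hU0u⟩
      · exact ⟨hxy, U2, hU2S, hsub2 (Finset.mem_erase.2 ⟨Ne.symm hne, hx⟩),
          hsub2 (Finset.mem_erase.2 ⟨hyu, hy⟩)⟩
    · by_cases hyv : y = v
      · subst hyv
        by_cases hxu : x = u
        · subst hxu
          exact ⟨hxy, U0, hU0S, hU0u, hU0v⟩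
        · exact ⟨hxy, U2, hU2S, hsub2 (Finset.mem_erase.2 ⟨hxu, hx⟩),
            hsub2 (Finset.mem_erase.2 ⟨Ne.symm hne, hy⟩)⟩
      · exact ⟨hxy, U1, hU1S, hsub1 (Finset.mem_erase.2 ⟨hxv, hx⟩),
          hsub1 (Finset.mem_erase.2 ⟨hyv, hy⟩)⟩
  have hDcirc : ∀ i, IsSimpCircuit k (D i) := by
    intro i
    refine ⟨hDcyc i, ?_, ?_⟩
    · intro hc
      apply hPf0 i
      have hle : Pf i ≤ D i := le_add_right le_rfl
      rw [hc] at hle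
      exact Multiset.le_zero.1 hle
    · intro T' hle hT'0 hT'ne hT'cyc
      have hcT' : IsSimpCycle k (contractS T' u v) := FD.contract_cycle hne hT'cyc
      have hcle : contractS T' u v ≤ contractS (D i) u v :=
        Multiset.map_le_map (Multiset.filter_le_filter _ hle)
      rw [hcontract i] at hcle
      have hcne : contractS T' u v ≠ 0 := by
        intro hc0
        exact FD.no_uv_cycle hne (Multiset.nodup_of_le hle (hDnd i)) (halluv T' hc0)
          hT'cyc.1 hT'cyc.2 hT'0
      have hceq : contractS T' u v = C i := FD.circuit_eq_of_subcycle (hCcirc i) hcT' hcle hcne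
      have hrest : IsSimpCycle k (D i - T') := FD.cycle_sub (hDcyc i) hT'cyc hle
      have hadd : T' + (D i - T') = D i := add_tsub_cancel_of_le hle
      have hcadd : contractS T' u v + contractS (D i - T') u v = C i := by
        have h7 : contractS (D i) u v = contractS T' u v + contractS (D i - T') u v := by
          rw [FD.contractS_eq_map, FD.contractS_eq_map, FD.contractS_eq_map,
            ← Multiset.map_add, ← Multiset.filter_add, hadd]
        rw [← h7, hcontract i]
      have hc0 : contractS (D i - T') u v = 0 := by
        rw [hceq] at hcadd
        exact (add_eq_left).1 hcadd
      have hrest0 : D i - T' = 0 := by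
        by_contra hr0
        exact FD.no_uv_cycle hne (Multiset.nodup_of_le (tsub_le_self) (hDnd i))
          (halluv _ hc0) hrest.1 hrest.2 hr0
      have hge : D i ≤ T' := tsub_eq_zero_iff_le.1 hrest0
      exact hT'ne (le_antisymm hle hge)
  have hmemD_iff : ∀ (i : Fin m) (U : Finset ℕ), ¬ (u ∈ U ∧ v ∈ U) → (U ∈ D i ↔ U ∈ Pf i) := by
    intro i U hUc
    constructor
    · intro h
      rcases Multiset.mem_add.1 h with h | h
      · exact h
      · exact absurd ⟨((hQmem i U).1 h).2.1, ((hQmem i U).1 h).2.2.1⟩ hUc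
    · exact fun h => Multiset.mem_add.2 (Or.inl h)
  have huniq : ∀ U ∈ S, ¬ (u ∈ U ∧ v ∈ U) → ∃! i, U ∈ D i := by
    intro U hU hUc
    have hUP : U ∈ P := Multiset.mem_filter.2 ⟨hU, hUc⟩
    have h1 : Multiset.count U P = 1 :=
      le_antisymm (Multiset.nodup_iff_count_le_one.1 (Multiset.nodup_of_le hPle hnd) U)
        (Multiset.count_pos.2 hUP)
    have hsum1 : (∑ i, Multiset.count U (Pf i)) = 1 := by
      rw [← FD.count_finsum, hPfsum, h1]
    have hex : ∃ i, U ∈ Pf i := by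
      by_contra hc
      push_neg at hc
      have hz : ∀ i ∈ Finset.univ, Multiset.count U (Pf i) = 0 :=
        fun i _ => Multiset.count_eq_zero_of_notMem (hc i)
      rw [Finset.sum_congr rfl hz] at hsum1
      simp at hsum1
    obtain ⟨i0, hi0⟩ := hex
    refine ⟨i0, (hmemD_iff i0 U hUc).2 hi0, ?_⟩
    intro j hj
    by_contra hji
    have hjP : U ∈ Pf j := (hmemD_iff j U hUc).1 hj
    have hle2 : ({j, i0} : Finset (Fin m)).sum (fun i => Multiset.count U (Pf i))
        ≤ ∑ i, Multiset.count U (Pf i) :=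
      Finset.sum_le_sum_of_subset (Finset.subset_univ _)
    rw [Finset.sum_pair hji] at hle2
    have hp1 := Multiset.count_pos.2 hi0
    have hp2 := Multiset.count_pos.2 hjP
    omega
  have hparity : ∀ U : Finset ℕ,
      (U ∈ S ↔ Odd ((Finset.univ.filter fun i => U ∈ D i).card)) := by
    intro U
    by_cases hUc : u ∈ U ∧ v ∈ U
    · have hiff : ∀ i, (U ∈ D i) ↔ U ∈ Q i := by
        intro i
        constructor
        · intro h
          rcases Multiset.mem_add.1 h with h | h
          · exact absurd hUc (hPfpred i U h)
          · exact h
        · exact fun h => Multiset.mem_add.2 (Or.inr h)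
      by_cases hprop : U ⊆ vertexSet S ∧ U.card = k + 1
      · have hFc : (U.erase v).card = k := by
          rw [Finset.card_erase_of_mem hUc.2, hprop.2]
          omega
        have huF : u ∈ U.erase v := Finset.mem_erase.2 ⟨hne, hUc.1⟩
        have hvF : v ∉ U.erase v := Finset.notMem_erase _ _
        have hfe : (Finset.univ.filter fun i => U ∈ D i)
            = (Finset.univ.filter fun i => Odd (simplexCount (Pf i) (U.erase v))) := by
          apply Finset.filter_congr
          intro i _
          rw [hiff i]
          constructor
          · intro h; exact ((hQmem i U).1 h).2.2.2
          · intro h; exact (hQmem i U).2 ⟨hprop, hUc.1, hUc.2, h⟩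
        rw [hfe, FD.odd_filter_card_iff]
        have hsum2 : ∑ i, simplexCount (Pf i) (U.erase v) = simplexCount P (U.erase v) := by
          rw [← hPfsum]
          exact (FD.countP_finsum _ _ _).symm
        rw [hsum2]
        have hsplit := FD.count_split (u := u) (v := v) S (U.erase v)
        have hboth := FD.count_both_of_u_mem (u := u) (v := v) hmc hFc huF hvF
        have hins : insert v (U.erase v) = U := Finset.insert_erase hUc.2
        rw [hins, FD.countP_eq_count] at hboth
        rw [hboth] at hsplit
        rw [← hP] at hsplit
        have hcS := hcycS (U.erase v) hFc
        have hble : Multiset.count U S ≤ 1 := Multiset.nodup_iff_count_le_one.1 hnd U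
        constructor
        · intro hUS
          have hb1 : Multiset.count U S = 1 :=
            le_antisymm hble (Multiset.count_pos.2 hUS)
          rw [hsplit, hb1] at hcS
          simp only [Nat.even_iff, Nat.odd_iff] at hcS ⊢
          omega
        · intro hodd
          rw [hsplit] at hcS
          have hb1 : 0 < Multiset.count U S := by
            simp only [Nat.even_iff, Nat.odd_iff] at hcS hodd
            omega
          exact Multiset.count_pos.1 hb1
      · have hUS : U ∉ S := fun hU => hprop ⟨fun x hx => mem_vertexSet_of_mem hU hx, hmc U hU⟩
        have hfe : (Finset.univ.filter fun i => U ∈ D i) = ∅ := by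
          rw [Finset.filter_eq_empty_iff]
          intro i _ hUD
          exact hprop ((hQmem i U).1 ((hiff i).1 hUD)).1
        rw [hfe]
        exact iff_of_false hUS (by simp)
    · by_cases hUS : U ∈ S
      · obtain ⟨i0, hi0, huq⟩ := huniq U hUS hUc
        have hfe : (Finset.univ.filter fun i => U ∈ D i) = {i0} := by
          ext j
          simp only [Finset.mem_filter, Finset.mem_univ, true_and, Finset.mem_singleton]
          exact ⟨fun h => huq j h, fun h => h ▸ hi0⟩
        rw [hfe, Finset.card_singleton]
        exact iff_of_true hUS odd_one
      · have hfe : (Finset.univ.filter fun i => U ∈ D i) = ∅ := by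
          rw [Finset.filter_eq_empty_iff]
          intro i _ hUD
          rcases Multiset.mem_add.1 hUD with h | h
          · exact hUS (Multiset.mem_of_le (hPfS i) h)
          · exact hUc ⟨((hQmem i U).1 h).2.1, ((hQmem i U).1 h).2.2.1⟩
        rw [hfe]
        exact iff_of_false hUS (by simp)
  have hAdjuv : ∀ i, (graphOf (D i)).Adj u v := by
    intro i
    obtain ⟨K, hK⟩ := Multiset.exists_mem_of_ne_zero (hQ0' i)
    exact ⟨hne, K, Multiset.mem_add.2 (Or.inr hK),
      ((hQmem i K).1 hK).2.1, ((hQmem i K).1 hK).2.2.1⟩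
  have hedges : ∀ x y : ℕ, (∃ i, (graphOf (D i)).Adj x y) ↔ (graphOf S).Adj x y := by
    intro x y
    constructor
    · rintro ⟨i, hxy, K, hK, hxK, hyK⟩
      rcases Multiset.mem_add.1 hK with h | h
      · exact ⟨hxy, K, Multiset.mem_of_le (hPfS i) h, hxK, hyK⟩
      · exact (hclique i K h).2.2.2.2 x hxK y hyK hxy
    · rintro ⟨hxy, U, hU, hxU, hyU⟩
      by_cases hUc : u ∈ U ∧ v ∈ U
      · have main_v : ∀ w z : ℕ, w ∈ U → z ∈ U → w ≠ z → w ≠ v → z ≠ v →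
            ∃ i, (graphOf (D i)).Adj w z := by
          intro w z hwU hzU hwz hwv hzv
          have hFc : (U.erase v).card = k := by
            rw [Finset.card_erase_of_mem hUc.2, hmc U hU]
            omega
          have hcS := hcycS (U.erase v) hFc
          have hUS1 : Multiset.count U S = 1 :=
            le_antisymm (Multiset.nodup_iff_count_le_one.1 hnd U) (Multiset.count_pos.2 hU)
          have hcons : U ::ₘ S.erase U = S := Multiset.cons_erase hU
          have hcnt : simplexCount S (U.erase v)
              = simplexCount (S.erase U) (U.erase v) + 1 := by
            conv_lhs => rw [← hcons]
            rw [simplexCount, Multiset.countP_cons, if_pos (Finset.erase_subset _ _)]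
            rfl
          have hpos : 0 < simplexCount (S.erase U) (U.erase v) := by
            simp only [Nat.even_iff] at hcS
            omega
          obtain ⟨U', hU'e, hsub'⟩ := Multiset.countP_pos.1 hpos
          have hU'S : U' ∈ S := Multiset.mem_of_mem_erase hU'e
          have hU'v : v ∉ U' := by
            intro hvU'
            have hUU' : U ⊆ U' := by
              intro a ha
              by_cases hav : a = v
              · exact hav ▸ hvU'
              · exact hsub' (Finset.mem_erase.2 ⟨hav, ha⟩)
            have heq : U = U' := Finset.eq_of_subset_of_card_le hUU'
              (by rw [hmc U hU, hmc U' hU'S])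
            subst heq
            have hp := Multiset.count_pos.2 hU'e
            rw [Multiset.count_erase_self, hUS1] at hp
            simp at hp
          have hU'P : U' ∈ P := Multiset.mem_filter.2 ⟨hU'S, fun hc => hU'v hc.2⟩
          rw [← hPfsum] at hU'P
          obtain ⟨i, -, hi⟩ := Multiset.mem_sum.1 hU'P
          exact ⟨i, hwz, U', Multiset.mem_add.2 (Or.inl hi),
            hsub' (Finset.mem_erase.2 ⟨hwv, hwU⟩), hsub' (Finset.mem_erase.2 ⟨hzv, hzU⟩)⟩
        have main_u : ∀ w z : ℕ, w ∈ U → z ∈ U → w ≠ z → w ≠ u → z ≠ u →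
            ∃ i, (graphOf (D i)).Adj w z := by
          intro w z hwU hzU hwz hwu hzu
          have hFc : (U.erase u).card = k := by
            rw [Finset.card_erase_of_mem hUc.1, hmc U hU]
            omega
          have hcS := hcycS (U.erase u) hFc
          have hUS1 : Multiset.count U S = 1 :=
            le_antisymm (Multiset.nodup_iff_count_le_one.1 hnd U) (Multiset.count_pos.2 hU)
          have hcons : U ::ₘ S.erase U = S := Multiset.cons_erase hU
          have hcnt : simplexCount S (U.erase u)
              = simplexCount (S.erase U) (U.erase u) + 1 := by
            conv_lhs => rw [← hcons]
            rw [simplexCount, Multiset.countP_cons, if_pos (Finset.erase_subset _ _)]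
            rfl
          have hpos : 0 < simplexCount (S.erase U) (U.erase u) := by
            simp only [Nat.even_iff] at hcS
            omega
          obtain ⟨U', hU'e, hsub'⟩ := Multiset.countP_pos.1 hpos
          have hU'S : U' ∈ S := Multiset.mem_of_mem_erase hU'e
          have hU'u : u ∉ U' := by
            intro huU'
            have hUU' : U ⊆ U' := by
              intro a ha
              by_cases hau : a = u
              · exact hau ▸ huU'
              · exact hsub' (Finset.mem_erase.2 ⟨hau, ha⟩)
            have heq : U = U' := Finset.eq_of_subset_of_card_le hUU'
              (by rw [hmc U hU, hmc U' hU'S])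
            subst heq
            have hp := Multiset.count_pos.2 hU'e
            rw [Multiset.count_erase_self, hUS1] at hp
            simp at hp
          have hU'P : U' ∈ P := Multiset.mem_filter.2 ⟨hU'S, fun hc => hU'u hc.1⟩
          rw [← hPfsum] at hU'P
          obtain ⟨i, -, hi⟩ := Multiset.mem_sum.1 hU'P
          exact ⟨i, hwz, U', Multiset.mem_add.2 (Or.inl hi),
            hsub' (Finset.mem_erase.2 ⟨hwu, hwU⟩), hsub' (Finset.mem_erase.2 ⟨hzu, hzU⟩)⟩
        by_cases hxv : x = v
        · subst hxv
          by_cases hyu : y = u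
          · subst hyu
            exact ⟨⟨0, hm1⟩, (graphOf (D ⟨0, hm1⟩)).symm (hAdjuv ⟨0, hm1⟩)⟩
          · exact main_u x y hxU hyU hxy (Ne.symm hne) hyu
        · by_cases hyv : y = v
          · subst hyv
            by_cases hxu : x = u
            · subst hxu
              exact ⟨⟨0, hm1⟩, hAdjuv ⟨0, hm1⟩⟩
            · exact main_u x y hxU hyU hxy hxu (Ne.symm hne)
          · exact main_v x y hxU hyU hxy hxv hyv
      · have hUP : U ∈ P := Multiset.mem_filter.2 ⟨hU, hUc⟩
        rw [← hPfsum] at hUP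
        obtain ⟨i, -, hi⟩ := Multiset.mem_sum.1 hUP
        exact ⟨i, hxy, U, Multiset.mem_add.2 (Or.inl hi), hxU, hyU⟩
  set 𝒰 : Finset (Finset ℕ) := S.toFinset ∪ (vertexSet S).powersetCard (k+1) with hUU
  have hDmemU : ∀ (i : Fin m), ∀ K ∈ D i, K ∈ 𝒰 := by
    intro i K hK
    rcases Multiset.mem_add.1 hK with h | h
    · exact Finset.mem_union_left _ (Multiset.mem_toFinset.2 (Multiset.mem_of_le (hPfS i) h))
    · exact Finset.mem_union_right _ (Finset.mem_powersetCard.2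
        ⟨((hQmem i K).1 h).1.1, ((hQmem i K).1 h).1.2⟩)
  have hSmemU : ∀ K ∈ S, K ∈ 𝒰 :=
    fun K hK => Finset.mem_union_left _ (Multiset.mem_toFinset.2 hK)
  have hcount_as : ∀ (d : Multiset (Finset ℕ)), d.Nodup → (∀ K ∈ d, K ∈ 𝒰) →
      ∀ (p : Finset ℕ → Prop) (_ : DecidablePred p),
      Multiset.countP p d = (𝒰.filter fun K => K ∈ d ∧ p K).card := by
    intro d hdn hdU p hp
    rw [Multiset.countP_eq_card_filter]
    have h1 : (Multiset.filter p d).toFinset.card = Multiset.card (Multiset.filter p d) :=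
      Multiset.toFinset_card_of_nodup (Multiset.Nodup.filter p hdn)
    rw [← h1]
    congr 1
    ext K
    simp only [Multiset.mem_toFinset, Multiset.mem_filter, Finset.mem_filter]
    constructor
    · rintro ⟨h2, h3⟩
      exact ⟨hdU K h2, h2, h3⟩
    · rintro ⟨-, h2, h3⟩
      exact ⟨h2, h3⟩
  have hconn : ∀ I : Finset (Fin m), I.Nonempty → I ≠ Finset.univ →
      ∃ j ∉ I, ∃ K : Finset ℕ, K.card = k + 1 ∧ u ∈ K ∧ v ∈ K ∧
        (graphOf S).IsClique K ∧ K ∉ S ∧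
        Odd ((I.filter fun i => K ∈ D i).card) ∧ K ∈ D j := by
    intro I hIne hIuniv
    by_contra hcon
    push_neg at hcon
    have stepA : ∀ K : Finset ℕ, K ∉ S → ¬ Odd ((I.filter fun i => K ∈ D i).card) := by
      intro K hKS hodd
      have hpos : 0 < (I.filter fun i => K ∈ D i).card := by
        rcases Nat.eq_zero_or_pos ((I.filter fun i => K ∈ D i).card) with h | h
        · rw [h] at hodd
          simp at hodd
        · exact h
      obtain ⟨i0, hi0⟩ := Finset.card_pos.1 hpos
      obtain ⟨hi0I, hi0D⟩ := Finset.mem_filter.1 hi0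
      have hKQ : K ∈ Q i0 := by
        rcases Multiset.mem_add.1 hi0D with h | h
        · exact absurd (Multiset.mem_of_le (hPfS i0) h) hKS
        · exact h
      obtain ⟨hKc, huK, hvK, hKcl⟩ := hclique i0 K hKQ
      have hnotj : ∀ j, j ∉ I → K ∉ D j :=
        fun j hj => hcon j hj K hKc huK hvK hKcl hKS hodd
      have hfe : (Finset.univ.filter fun i => K ∈ D i) = (I.filter fun i => K ∈ D i) := by
        ext j
        simp only [Finset.mem_filter, Finset.mem_univ, true_and]
        constructor
        · intro h
          by_cases hjI : j ∈ I
          · exact ⟨hjI, h⟩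
          · exact absurd h (hnotj j hjI)
        · rintro ⟨-, h⟩
          exact h
      exact hKS ((hparity K).2 (by rw [hfe]; exact hodd))
    set W : Multiset (Finset ℕ) :=
      S.filter (fun U => Odd ((I.filter fun i => U ∈ D i).card)) with hW
    have hWle : W ≤ S := Multiset.filter_le _ _
    obtain ⟨i0, hi0I⟩ := hIne
    obtain ⟨Us, hUs⟩ := Multiset.exists_mem_of_ne_zero (hPf0 i0)
    have hUsS : Us ∈ S := Multiset.mem_of_le (hPfS i0) hUs
    have hUsc : ¬ (u ∈ Us ∧ v ∈ Us) := hPfpred i0 Us hUs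
    obtain ⟨i0', hi0', huq⟩ := huniq Us hUsS hUsc
    have hWne : Us ∈ W := by
      rw [hW, Multiset.mem_filter]
      refine ⟨hUsS, ?_⟩
      have hfe : (I.filter fun i => Us ∈ D i) = {i0} := by
        ext j
        simp only [Finset.mem_filter, Finset.mem_singleton]
        constructor
        · rintro ⟨hjI, hjD⟩
          rw [huq j hjD, ← huq i0 (Multiset.mem_add.2 (Or.inl hUs))]
        · rintro rfl
          exact ⟨hi0I, Multiset.mem_add.2 (Or.inl hUs)⟩
      rw [hfe, Finset.card_singleton]
      exact odd_one
    obtain ⟨j0, hj0I⟩ : ∃ j, j ∉ I := by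
      by_contra hc
      push_neg at hc
      exact hIuniv (Finset.eq_univ_iff_forall.2 hc)
    obtain ⟨Ut, hUt⟩ := Multiset.exists_mem_of_ne_zero (hPf0 j0)
    have hUtS : Ut ∈ S := Multiset.mem_of_le (hPfS j0) hUt
    have hUtc := hPfpred j0 Ut hUt
    obtain ⟨j0', hj0', huq'⟩ := huniq Ut hUtS hUtc
    have hUtnW : Ut ∉ W := by
      rw [hW, Multiset.mem_filter]
      rintro ⟨-, hodd⟩
      have hfe : (I.filter fun i => Ut ∈ D i) = ∅ := by
        rw [Finset.filter_eq_empty_iff]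
        intro i hiI hiD
        have h1 : i = j0' := huq' i hiD
        have h2 : j0 = j0' := huq' j0 (Multiset.mem_add.2 (Or.inl hUt))
        rw [h1, ← h2] at hiI
        exact hj0I hiI
      rw [hfe] at hodd
      simp at hodd
    have hWneS : W ≠ S := fun h => hUtnW (h ▸ hUtS)
    have hW0 : W ≠ 0 := fun h => Multiset.notMem_zero Us (h ▸ hWne)
    have hWcyc : IsSimpCycle k W := by
      constructor
      · exact fun U hU => hmc U (Multiset.mem_of_le hWle hU)
      · intro F hF
        have hMeven : Even (∑ i ∈ I, simplexCount (D i) F) := by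
          refine Finset.sum_induction _ Even (fun a b => Even.add) Even.zero ?_
          exact fun i _ => (hDcyc i).2 F hF
        have hswap : ∑ i ∈ I, simplexCount (D i) F
            = ∑ K ∈ 𝒰, (if F ⊆ K then (I.filter fun i => K ∈ D i).card else 0) := by
          have h1 : ∀ i ∈ I, simplexCount (D i) F
              = (𝒰.filter fun K => K ∈ D i ∧ F ⊆ K).card :=
            fun i _ => hcount_as (D i) (hDnd i) (hDmemU i) _ _
          rw [Finset.sum_congr rfl h1]
          have h2 : ∀ i ∈ I, (𝒰.filter fun K => K ∈ D i ∧ F ⊆ K).card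
              = ∑ K ∈ 𝒰, (if K ∈ D i ∧ F ⊆ K then 1 else 0) :=
            fun i _ => Finset.card_filter _ _
          rw [Finset.sum_congr rfl h2, Finset.sum_comm]
          refine Finset.sum_congr rfl ?_
          intro K _
          by_cases hFK : F ⊆ K
          · rw [if_pos hFK, Finset.card_filter]
            refine Finset.sum_congr rfl ?_
            intro i _
            simp [hFK]
          · rw [if_neg hFK]
            refine Finset.sum_eq_zero ?_
            intro i _
            simp [hFK]
        rw [hswap] at hMeven
        have hMcard : Even ((𝒰.filter fun K =>
            Odd (if F ⊆ K then (I.filter fun i => K ∈ D i).card else 0)).card) :=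
          (FD.even_filter_card_iff _ _).2 hMeven
        have hWc : simplexCount W F = (𝒰.filter fun K =>
            Odd (if F ⊆ K then (I.filter fun i => K ∈ D i).card else 0)).card := by
          rw [simplexCount, hW, Multiset.countP_filter, hcount_as S hnd hSmemU _ _]
          congr 1
          ext K
          simp only [Finset.mem_filter]
          constructor
          · rintro ⟨hKU, hKS, hFK, hodd⟩
            refine ⟨hKU, ?_⟩
            rw [if_pos hFK]
            exact hodd
          · rintro ⟨hKU, hodd⟩
            by_cases hFK : F ⊆ K
            · rw [if_pos hFK] at hodd
              by_cases hKS : K ∈ S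
              · exact ⟨hKU, hKS, hFK, hodd⟩
              · exact absurd hodd (stepA K hKS)
            · rw [if_neg hFK] at hodd
              simp at hodd
        rw [hWc]
        exact hMcard
    exact hS.2.2 W hWle hW0 hWneS hWcyc
  have hDnt : ∀ i, ¬ IsTrivialSimpCircuit (D i) := by
    rintro i ⟨Wt, hWt⟩
    have h1 := hDnd i
    rw [hWt] at h1
    simp at h1
  refine ⟨m, D, hm1, fun i => ⟨hDcirc i, hDnt i⟩,
    fun i => by rw [hcontract i]; exact hCcirc i, ?_, huniq, hparity, hAdjuv, hedges, hconn⟩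
  intro i K hK hKS
  rcases Multiset.mem_add.1 hK with h | h
  · exact absurd (Multiset.mem_of_le (hPfS i) h) hKS
  · exact hclique i K h
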